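/- Let U : ℝ^d → ℝ be three times continuously differentiable, coercive, with finitely many critical points, all nondegenerate, and assume U has at least two local minima. Fix a local minimum m, let M₀ denote the (finite) set of local minima of U, and set Γ(m) := min_{m′ ∈ M₀, m′ ≠ m} Θ(m, m′) − U(m). Let W be the connected component of {x ∈ ℝ^d : U(x) < U(m) + Γ(m)} containing m. Then there exists another connected component W′ of {x ∈ ℝ^d : U(x) < U(m) + Γ(m)} such that W ∩ W′ = ∅ and cl(W) ∩ cl(W′) ≠ ∅. -/

import Mathlib

/-- The Hessian matrix `∇²U(x)` of `U : ℝ^d → ℝ` at `x`, whose `(i, j)` entry is the second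
derivative of `U` at `x` in the directions of the `i`-th and `j`-th coordinate vectors. -/
noncomputable def hessianMatrix {d : ℕ} (U : EuclideanSpace ℝ (Fin d) → ℝ)
    (x : EuclideanSpace ℝ (Fin d)) : Matrix (Fin d) (Fin d) ℝ :=
  fun i j =>
    iteratedFDeriv ℝ 2 U x ![EuclideanSpace.single i (1 : ℝ), EuclideanSpace.single j (1 : ℝ)]

/-- The communication height `Θ(x, y)` between `x` and `y`: the infimum, over all continuous
paths `z : [0, 1] → ℝ^d` with `z 0 = x` and `z 1 = y`, of `max_{t ∈ [0, 1]} U (z t)`. -/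
noncomputable def commHeight {d : ℕ} (U : EuclideanSpace ℝ (Fin d) → ℝ)
    (x y : EuclideanSpace ℝ (Fin d)) : ℝ :=
  sInf {h : ℝ | ∃ z : ℝ → EuclideanSpace ℝ (Fin d),
    ContinuousOn z (Set.Icc 0 1) ∧ z 0 = x ∧ z 1 = y ∧
    h = sSup (U '' (z '' Set.Icc 0 1))}

/-- The depth `Γ(m) = min_{m' ∈ M₀, m' ≠ m} Θ(m, m') - U(m)` of a local minimum `m` of `U`,
where `M₀` is the set of local minima of `U`. -/
noncomputable def depth {d : ℕ} (U : EuclideanSpace ℝ (Fin d) → ℝ)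
    (m : EuclideanSpace ℝ (Fin d)) : ℝ :=
  sInf {h : ℝ | ∃ m', IsLocalMin U m' ∧ m' ≠ m ∧ h = commHeight U m m'} - U m


open Set Metric Filter

section Aux

variable {d : ℕ}

theorem isLocalMin_gradient_zero {U : EuclideanSpace ℝ (Fin d) → ℝ} {x : EuclideanSpace ℝ (Fin d)}
    (h : IsLocalMin U x) : gradient U x = 0 := by
  unfold gradient
  rw [h.fderiv_eq_zero]
  simp

theorem sublevel_compact {U : EuclideanSpace ℝ (Fin d) → ℝ} (hUc : Continuous U)
    (hcoer : Tendsto U (cocompact (EuclideanSpace ℝ (Fin d))) atTop) (c : ℝ) :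
    IsCompact {x | U x ≤ c} := by
  obtain ⟨K, hK, hKsub⟩ := Filter.mem_cocompact.1 (hcoer (Ioi_mem_atTop c))
  refine hK.of_isClosed_subset (isClosed_le hUc continuous_const) ?_
  intro x hx
  by_contra hxK
  exact absurd (hKsub hxK) (by simpa using hx)

theorem pathSups_nonempty (U : EuclideanSpace ℝ (Fin d) → ℝ) (x y : EuclideanSpace ℝ (Fin d)) :
    {h : ℝ | ∃ z : ℝ → EuclideanSpace ℝ (Fin d),
      ContinuousOn z (Set.Icc 0 1) ∧ z 0 = x ∧ z 1 = y ∧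
      h = sSup (U '' (z '' Set.Icc 0 1))}.Nonempty := by
  refine ⟨_, fun t => x + t • (y - x), ?_, ?_, ?_, rfl⟩
  · exact (continuous_const.add (continuous_id.smul continuous_const)).continuousOn
  · simp
  · simp

theorem pathSups_bddBelow {U : EuclideanSpace ℝ (Fin d) → ℝ} (hUc : Continuous U)
    (x y : EuclideanSpace ℝ (Fin d)) :
    BddBelow {h : ℝ | ∃ z : ℝ → EuclideanSpace ℝ (Fin d),
      ContinuousOn z (Set.Icc 0 1) ∧ z 0 = x ∧ z 1 = y ∧
      h = sSup (U '' (z '' Set.Icc 0 1))} := by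
  refine ⟨U x, ?_⟩
  rintro h ⟨z, hz, h0, h1, rfl⟩
  have hcmp : IsCompact (U '' (z '' Set.Icc 0 1)) :=
    (isCompact_Icc.image_of_continuousOn hz).image_of_continuousOn hUc.continuousOn
  exact le_csSup hcmp.bddAbove ⟨z 0, ⟨0, by norm_num, rfl⟩, by rw [h0]⟩

theorem commHeight_le_path {U : EuclideanSpace ℝ (Fin d) → ℝ} (hUc : Continuous U)
    {x y : EuclideanSpace ℝ (Fin d)} (z : ℝ → EuclideanSpace ℝ (Fin d))
    (hz : ContinuousOn z (Set.Icc 0 1)) (h0 : z 0 = x) (h1 : z 1 = y) :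
    commHeight U x y ≤ sSup (U '' (z '' Set.Icc 0 1)) :=
  csInf_le (pathSups_bddBelow hUc x y) ⟨z, hz, h0, h1, rfl⟩

theorem le_commHeight {U : EuclideanSpace ℝ (Fin d) → ℝ} (hUc : Continuous U)
    {x y : EuclideanSpace ℝ (Fin d)} {b : ℝ}
    (hb : ∀ z : ℝ → EuclideanSpace ℝ (Fin d), ContinuousOn z (Set.Icc 0 1) → z 0 = x → z 1 = y →
      ∃ t ∈ Set.Icc (0:ℝ) 1, b ≤ U (z t)) :
    b ≤ commHeight U x y := by
  refine le_csInf (pathSups_nonempty U x y) ?_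
  rintro h ⟨z, hz, h0, h1, rfl⟩
  obtain ⟨t, ht, hbt⟩ := hb z hz h0 h1
  have hcmp : IsCompact (U '' (z '' Set.Icc 0 1)) :=
    (isCompact_Icc.image_of_continuousOn hz).image_of_continuousOn hUc.continuousOn
  exact hbt.trans (le_csSup hcmp.bddAbove ⟨z t, ⟨t, ht, rfl⟩, rfl⟩)

theorem exists_sphere_barrier (hd : 1 ≤ d) {U : EuclideanSpace ℝ (Fin d) → ℝ}
    (hUc : Continuous U) (hfin : {x | gradient U x = 0}.Finite)
    {p q : EuclideanSpace ℝ (Fin d)} (hp : IsLocalMin U p) (hq : q ≠ p) :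
    ∃ r η : ℝ, 0 < r ∧ r < dist q p ∧ 0 < η ∧
      ∀ x, dist x p = r → U p + η ≤ U x := by
  haveI : Nonempty (Fin d) := ⟨⟨0, hd⟩⟩
  have hp' : ∀ᶠ y in nhds p, U p ≤ U y := hp
  obtain ⟨R, hR, hRmin⟩ := Metric.eventually_nhds_iff_ball.1 hp'
  have hqp : 0 < dist q p := dist_pos.2 hq
  have hmin : 0 < min (R / 2) (dist q p) := lt_min (by linarith) hqp
  obtain ⟨r, hr⟩ :=
    ((Set.Ioo_infinite hmin).diff (hfin.image (fun c => dist c p))).nonempty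
  have hr0 : 0 < r := hr.1.1
  have hrR : r < R / 2 := lt_of_lt_of_le hr.1.2 (min_le_left _ _)
  have hrq : r < dist q p := lt_of_lt_of_le hr.1.2 (min_le_right _ _)
  have hstrict : ∀ x, dist x p = r → U p < U x := by
    intro x hx
    have hxball : x ∈ ball p R := by
      rw [mem_ball, hx]; linarith
    rcases (hRmin x hxball).lt_or_eq with h | h
    · exact h
    · exfalso
      have hxmin : IsLocalMin U x := by
        refine Metric.eventually_nhds_iff_ball.2 ⟨R / 2, by linarith, fun y hy => ?_⟩
        have : y ∈ ball p R := by
          rw [mem_ball] at hy ⊢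
          calc dist y p ≤ dist y x + dist x p := dist_triangle _ _ _
            _ < R / 2 + r := by linarith
            _ ≤ R := by linarith
        rw [← h]
        exact hRmin y this
      exact hr.2 ⟨x, isLocalMin_gradient_zero hxmin, hx⟩
  have hsne : (sphere p r).Nonempty := NormedSpace.sphere_nonempty.2 hr0.le
  obtain ⟨x₀, hx₀, hminOn⟩ := (isCompact_sphere p r).exists_isMinOn hsne hUc.continuousOn
  refine ⟨r, U x₀ - U p, hr0, hrq, by linarith [hstrict x₀ hx₀], fun x hx => ?_⟩
  have hle : U x₀ ≤ U x := hminOn (show x ∈ sphere p r from hx)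
  linarith

theorem lt_commHeight_left (hd : 1 ≤ d) {U : EuclideanSpace ℝ (Fin d) → ℝ}
    (hUc : Continuous U) (hfin : {x | gradient U x = 0}.Finite)
    {p q : EuclideanSpace ℝ (Fin d)} (hp : IsLocalMin U p) (hq : q ≠ p) :
    U p < commHeight U p q := by
  obtain ⟨r, η, hr0, hrq, hη, hbar⟩ := exists_sphere_barrier hd hUc hfin hp hq
  have h := le_commHeight (b := U p + η) hUc (x := p) (y := q) ?_
  · linarith
  intro z hz h0 h1
  have hg : ContinuousOn (fun t => dist (z t) p) (Set.Icc 0 1) := (continuous_id.dist continuous_const).comp_continuousOn hz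
  have hmem : r ∈ Set.Icc (dist (z 0) p) (dist (z 1) p) := by
    rw [h0, h1]
    simpa using ⟨hr0.le, hrq.le⟩
  obtain ⟨t, ht, hts⟩ := intermediate_value_Icc zero_le_one hg hmem
  exact ⟨t, ht, hbar _ hts⟩

theorem lt_commHeight_right (hd : 1 ≤ d) {U : EuclideanSpace ℝ (Fin d) → ℝ}
    (hUc : Continuous U) (hfin : {x | gradient U x = 0}.Finite)
    {p q : EuclideanSpace ℝ (Fin d)} (hp : IsLocalMin U p) (hq : q ≠ p) :
    U p < commHeight U q p := by
  obtain ⟨r, η, hr0, hrq, hη, hbar⟩ := exists_sphere_barrier hd hUc hfin hp hq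
  have h := le_commHeight (b := U p + η) hUc (x := q) (y := p) ?_
  · linarith
  intro z hz h0 h1
  have hg : ContinuousOn (fun t => dist (z t) p) (Set.Icc 0 1) := (continuous_id.dist continuous_const).comp_continuousOn hz
  have hmem : r ∈ Set.Icc (dist (z 1) p) (dist (z 0) p) := by
    rw [h0, h1]
    simpa using ⟨hr0.le, hrq.le⟩
  obtain ⟨t, ht, hts⟩ := intermediate_value_Icc' zero_le_one hg hmem
  exact ⟨t, ht, hbar _ hts⟩

theorem depth_attained {U : EuclideanSpace ℝ (Fin d) → ℝ}
    (hfin : {x | gradient U x = 0}.Finite) (m : EuclideanSpace ℝ (Fin d))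
    (htwo : ∃ m', IsLocalMin U m' ∧ m' ≠ m) :
    ∃ m', IsLocalMin U m' ∧ m' ≠ m ∧ commHeight U m m' = U m + depth U m := by
  set Dset := {h : ℝ | ∃ m', IsLocalMin U m' ∧ m' ≠ m ∧ h = commHeight U m m'} with hD
  have hDfin : Dset.Finite := by
    refine (hfin.image (fun x => commHeight U m x)).subset ?_
    rintro h ⟨m', hm', hne, rfl⟩
    exact ⟨m', isLocalMin_gradient_zero hm', rfl⟩
  have hDne : Dset.Nonempty := by
    obtain ⟨m', hm', hne⟩ := htwo
    exact ⟨commHeight U m m', m', hm', hne, rfl⟩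
  obtain ⟨m', hm', hne, heq⟩ := hDne.csInf_mem hDfin
  refine ⟨m', hm', hne, ?_⟩
  rw [← heq]
  have hdep : depth U m = sInf Dset - U m := rfl
  rw [hdep]
  ring

theorem component_has_crit {U : EuclideanSpace ℝ (Fin d) → ℝ} (hUc : Continuous U)
    (hcoer : Tendsto U (cocompact (EuclideanSpace ℝ (Fin d))) atTop)
    {Λ : ℝ} {x : EuclideanSpace ℝ (Fin d)} (hx : U x < Λ) :
    ∃ c, gradient U c = 0 ∧ c ∈ connectedComponentIn {y | U y < Λ} x := by
  set S : Set (EuclideanSpace ℝ (Fin d)) := {y | U y < Λ} with hS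
  have hSopen : IsOpen S := isOpen_lt hUc continuous_const
  set C := connectedComponentIn S x with hC
  have hxC : x ∈ C := mem_connectedComponentIn hx
  have hClsub : closure C ⊆ {y | U y ≤ Λ} :=
    closure_minimal (fun y hy => le_of_lt (show U y < Λ from connectedComponentIn_subset S x hy))
      (isClosed_le hUc continuous_const)
  have hClcomp : IsCompact (closure C) :=
    (sublevel_compact hUc hcoer Λ).of_isClosed_subset isClosed_closure hClsub
  obtain ⟨q, hqcl, hqmin⟩ := hClcomp.exists_isMinOn ⟨x, subset_closure hxC⟩ hUc.continuousOn
  have hqC : q ∈ C := by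
    by_contra hqC
    have hqS : q ∈ S := by
      by_contra hqS
      have h1 : Λ ≤ U q := not_lt.1 hqS
      have h2 : U q ≤ U x := hqmin (subset_closure hxC)
      exact absurd hx (by simp only [not_lt]; linarith)
    have hopen : IsOpen (connectedComponentIn S q) := hSopen.connectedComponentIn
    have hqq : q ∈ connectedComponentIn S q := mem_connectedComponentIn hqS
    obtain ⟨y, hyo, hyC⟩ := mem_closure_iff.1 hqcl _ hopen hqq
    have e1 : connectedComponentIn S q = connectedComponentIn S y := connectedComponentIn_eq hyo
    have e2 : connectedComponentIn S x = connectedComponentIn S y := connectedComponentIn_eq hyC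
    exact hqC (by rw [hC, e2, ← e1]; exact hqq)
  have hqlm : IsLocalMin U q := by
    have hCnhds : C ∈ nhds q := hSopen.connectedComponentIn.mem_nhds hqC
    exact Filter.eventually_of_mem hCnhds (fun y hy => hqmin (subset_closure hy))
  exact ⟨q, isLocalMin_gradient_zero hqlm, hqC⟩

end Aux

/-- Let `U : ℝ^d → ℝ` be `C³`, coercive, with finitely many critical points,
all nondegenerate, and with at least two local minima.  Let `m` be a local minimum and let `W`
be the connected component of `{x : U x < U m + Γ(m)}` containing `m`.  Then there is another
connected component `W'` of this set with `W ∩ W' = ∅` and `cl W ∩ cl W' ≠ ∅`. -/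
theorem neighboring_component_exists
    (d : ℕ) (hd : 1 ≤ d) (U : EuclideanSpace ℝ (Fin d) → ℝ)
    (hU : ContDiff ℝ 3 U)
    (hcoer : Filter.Tendsto U (Filter.cocompact (EuclideanSpace ℝ (Fin d))) Filter.atTop)
    (hfin : {x | gradient U x = 0}.Finite)
    (hnd : ∀ x, gradient U x = 0 → IsUnit (hessianMatrix U x))
    (m : EuclideanSpace ℝ (Fin d)) (hm : IsLocalMin U m)
    (htwo : ∃ m', IsLocalMin U m' ∧ m' ≠ m) :
    ∃ W' : Set (EuclideanSpace ℝ (Fin d)),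
      (∃ x₀ ∈ {x | U x < U m + depth U m},
        W' = connectedComponentIn {x | U x < U m + depth U m} x₀) ∧
      connectedComponentIn {x | U x < U m + depth U m} m ∩ W' = ∅ ∧
      (closure (connectedComponentIn {x | U x < U m + depth U m} m) ∩
        closure W').Nonempty := by
  classical
  have hUc : Continuous U := hU.continuous
  set Λ : ℝ := U m + depth U m with hΛdef
  set S : Set (EuclideanSpace ℝ (Fin d)) := {x | U x < Λ} with hSdef
  have hSopen : IsOpen S := isOpen_lt hUc continuous_const
  obtain ⟨m', hm'min, hm'ne, hΘ⟩ := depth_attained hfin m htwo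
  have hmS : m ∈ S := by
    have := lt_commHeight_left hd hUc hfin hm hm'ne
    show U m < Λ
    rw [hΛdef, ← hΘ]
    exact this
  have hm'S : m' ∈ S := by
    have := lt_commHeight_right hd hUc hfin hm'min hm'ne.symm
    show U m' < Λ
    rw [hΛdef, ← hΘ]
    exact this
  set W := connectedComponentIn S m with hWdef
  have hWopen : IsOpen W := hSopen.connectedComponentIn
  have hmW : m ∈ W := mem_connectedComponentIn hmS
  have hWsubS : W ⊆ S := connectedComponentIn_subset S m
  -- m' is not in W
  have hm'W : m' ∉ W := by
    intro hmem
    have hconn : IsConnected W := isConnected_connectedComponentIn_iff.2 hmS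
    have hpconn : IsPathConnected W :=
      (IsOpen.isConnected_iff_isPathConnected hWopen).mp hconn
    obtain ⟨γ, hγ⟩ := hpconn.joinedIn m hmW m' hmem
    set z : ℝ → EuclideanSpace ℝ (Fin d) := ⇑γ.extend with hzdef
    have hzcont : ContinuousOn z (Set.Icc 0 1) := γ.continuous_extend.continuousOn
    have himg : z '' Set.Icc 0 1 ⊆ W := by
      rintro _ ⟨t, ht, rfl⟩
      rw [hzdef, Path.extend_apply γ ht]
      exact hγ _
    have hAcomp : IsCompact (U '' (z '' Set.Icc 0 1)) :=
      (isCompact_Icc.image_of_continuousOn hzcont).image_of_continuousOn hUc.continuousOn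
    have hAne : (U '' (z '' Set.Icc 0 1)).Nonempty :=
      ⟨U (z 0), ⟨z 0, ⟨0, by norm_num, rfl⟩, rfl⟩⟩
    obtain ⟨w', hw'W, hweq⟩ := hAcomp.sSup_mem hAne
    have hlt : U w' < Λ := hWsubS (himg hw'W)
    have hle : commHeight U m m' ≤ sSup (U '' (z '' Set.Icc 0 1)) :=
      commHeight_le_path hUc z hzcont (Path.extend_zero γ) (Path.extend_one γ)
    rw [← hweq] at hle
    rw [hΘ] at hle
    exact absurd (lt_of_le_of_lt hle hlt) (lt_irrefl Λ)
  -- compactness facts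
  have hcls : IsClosed {x : EuclideanSpace ℝ (Fin d) | U x ≤ Λ} := isClosed_le hUc continuous_const
  have hSsub : S ⊆ {x | U x ≤ Λ} := fun x hx => le_of_lt (show U x < Λ from hx)
  have hclW_comp : IsCompact (closure W) :=
    (sublevel_compact hUc hcoer Λ).of_isClosed_subset isClosed_closure
      (closure_minimal (hWsubS.trans hSsub) hcls)
  have hWclne : (closure W).Nonempty := ⟨m, subset_closure hmW⟩
  by_contra hcon
  have H : ∀ x₀ ∈ S, W ∩ connectedComponentIn S x₀ = ∅ →
      closure W ∩ closure (connectedComponentIn S x₀) = ∅ := by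
    intro x₀ hx₀ hdisj
    refine Set.not_nonempty_iff_eq_empty.1 (fun hne => hcon ?_)
    exact ⟨connectedComponentIn S x₀, ⟨x₀, hx₀, rfl⟩, hdisj, hne⟩
  -- distinct components are disjoint
  have hdisjointness : ∀ x₀ ∈ S, connectedComponentIn S x₀ ≠ W →
      W ∩ connectedComponentIn S x₀ = ∅ := by
    intro x₀ hx₀ hne
    rw [Set.eq_empty_iff_forall_notMem]
    rintro y ⟨hyW, hyC⟩
    exact hne ((connectedComponentIn_eq hyC).trans (connectedComponentIn_eq hyW).symm)
  -- collection of other components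
  set 𝒞' : Set (Set (EuclideanSpace ℝ (Fin d))) :=
    {C | (∃ x ∈ S, C = connectedComponentIn S x) ∧ C ≠ W} with h𝒞'def
  have h𝒞'fin : 𝒞'.Finite := by
    refine ((hfin.image (fun c => connectedComponentIn S c)).subset ?_).subset
      (fun C hC => hC.1)
    rintro C ⟨x, hx, rfl⟩
    obtain ⟨c, hc0, hcC⟩ := component_has_crit hUc hcoer hx
    exact ⟨c, hc0, (connectedComponentIn_eq hcC).symm⟩
  set G : Set (EuclideanSpace ℝ (Fin d)) := ⋃ C ∈ 𝒞', closure C with hGdef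
  have hGcomp : IsCompact G := by
    refine h𝒞'fin.isCompact_biUnion (fun C hC => ?_)
    obtain ⟨⟨x, hx, rfl⟩, -⟩ := hC
    exact (sublevel_compact hUc hcoer Λ).of_isClosed_subset isClosed_closure
      (closure_minimal ((connectedComponentIn_subset S x).trans hSsub) hcls)
  have hpos : ∀ a ∈ G, 0 < Metric.infDist a (closure W) := by
    intro a ha
    rcases Set.mem_iUnion₂.1 ha with ⟨C, hC, haC⟩
    have hCW : closure W ∩ closure C = ∅ := by
      obtain ⟨⟨x₀, hx₀, rfl⟩, hne⟩ := hC
      exact H x₀ hx₀ (hdisjointness x₀ hx₀ hne)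
    have haW : a ∉ closure W := fun h =>
      (Set.eq_empty_iff_forall_notMem.1 hCW a) ⟨h, haC⟩
    exact (isClosed_closure.notMem_iff_infDist_pos hWclne).1 haW
  obtain ⟨D, hD, hDle⟩ : ∃ D > 0, ∀ a ∈ G, D ≤ Metric.infDist a (closure W) := by
    rcases G.eq_empty_or_nonempty with hG | hG
    · exact ⟨1, one_pos, by simp [hG]⟩
    · obtain ⟨a₀, ha₀, hminG⟩ :=
        hGcomp.exists_isMinOn hG (Metric.continuous_infDist_pt (closure W)).continuousOn
      exact ⟨_, hpos a₀ ha₀, fun a ha => hminG ha⟩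
  have hSG : ∀ x ∈ S, x ∉ W → x ∈ G := by
    intro x hx hxW
    have hne : connectedComponentIn S x ≠ W := fun h => hxW (h ▸ mem_connectedComponentIn hx)
    exact Set.mem_iUnion₂.2
      ⟨connectedComponentIn S x, ⟨⟨x, hx, rfl⟩, hne⟩, subset_closure (mem_connectedComponentIn hx)⟩
  -- points at intermediate distance from cl W are not in S
  have hnotS : ∀ y : EuclideanSpace ℝ (Fin d),
      0 < Metric.infDist y (closure W) → Metric.infDist y (closure W) < D → Λ ≤ U y := by
    intro y hy1 hy2
    by_contra h
    have hyS : y ∈ S := not_le.1 h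
    by_cases hyW : y ∈ W
    · rw [Metric.infDist_zero_of_mem (subset_closure hyW)] at hy1
      exact lt_irrefl 0 hy1
    · exact absurd hy2 (not_lt.2 (hDle y (hSG y hyS hyW)))
  -- choose a shell radius avoiding distances of critical points
  obtain ⟨s, hs⟩ :=
    ((Set.Ioo_infinite hD).diff
      (hfin.image (fun c => Metric.infDist c (closure W)))).nonempty
  have hs0 : 0 < s := hs.1.1
  have hsD : s < D := hs.1.2
  -- on the shell, U > Λ
  have hshell : ∀ x, Metric.infDist x (closure W) = s → Λ < U x := by
    intro x hx
    have hge : Λ ≤ U x := hnotS x (hx ▸ hs0) (hx ▸ hsD)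
    rcases hge.lt_or_eq with h | h
    · exact h
    · exfalso
      have hxlm : IsLocalMin U x := by
        refine Metric.eventually_nhds_iff_ball.2 ⟨min s (D - s), lt_min hs0 (by linarith), ?_⟩
        intro y hy
        rw [Metric.mem_ball] at hy
        have hyd : dist y x < min s (D - s) := hy
        have hlow : 0 < Metric.infDist y (closure W) := by
          have h1 : Metric.infDist x (closure W) ≤ Metric.infDist y (closure W) + dist x y :=
            Metric.infDist_le_infDist_add_dist
          have h2 : dist x y < s := (dist_comm x y ▸ hyd).trans_le (min_le_left _ _)
          rw [hx] at h1
          linarith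
        have hhigh : Metric.infDist y (closure W) < D := by
          have h1 : Metric.infDist y (closure W) ≤ Metric.infDist x (closure W) + dist y x :=
            Metric.infDist_le_infDist_add_dist
          have h2 : dist y x < D - s := hyd.trans_le (min_le_right _ _)
          rw [hx] at h1
          linarith
        rw [← h]
        exact hnotS y hlow hhigh
      exact hs.2 ⟨x, isLocalMin_gradient_zero hxlm, hx⟩
  -- uniform barrier
  obtain ⟨η, hη, hηle⟩ : ∃ η > 0, ∀ x, Metric.infDist x (closure W) = s → Λ + η ≤ U x := by
    set K : Set (EuclideanSpace ℝ (Fin d)) :=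
      {x | Metric.infDist x (closure W) = s} ∩ {x | U x ≤ Λ + 1} with hKdef
    have hKcomp : IsCompact K :=
      (sublevel_compact hUc hcoer (Λ + 1)).of_isClosed_subset
        ((isClosed_eq (Metric.continuous_infDist_pt _) continuous_const).inter
          (isClosed_le hUc continuous_const))
        (fun x hx => hx.2)
    rcases K.eq_empty_or_nonempty with hK | hK
    · refine ⟨1, one_pos, fun x hx => ?_⟩
      by_contra hxc
      push_neg at hxc
      have hxK : x ∈ K := ⟨hx, show U x ≤ Λ + 1 from hxc.le⟩
      rw [hK] at hxK
      exact hxK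
    · obtain ⟨x₀, hx₀, hminK⟩ := hKcomp.exists_isMinOn hK hUc.continuousOn
      have hx₀gt : Λ < U x₀ := hshell x₀ hx₀.1
      refine ⟨U x₀ - Λ, by linarith, fun x hx => ?_⟩
      rcases le_or_gt (U x) (Λ + 1) with hcase | hcase
      · have : U x₀ ≤ U x := hminK (⟨hx, hcase⟩ : x ∈ K)
        linarith
      · have : U x₀ ≤ Λ + 1 := hx₀.2
        linarith
  -- contradiction with commHeight U m m' = Λ
  have hfinal : Λ + η ≤ commHeight U m m' := by
    refine le_commHeight hUc ?_
    intro z hz h0 h1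
    have hg : ContinuousOn (fun t => Metric.infDist (z t) (closure W)) (Set.Icc 0 1) :=
      (Metric.continuous_infDist_pt (closure W)).comp_continuousOn hz
    have hg0 : Metric.infDist (z 0) (closure W) = 0 := by
      rw [h0]; exact Metric.infDist_zero_of_mem (subset_closure hmW)
    have hg1 : D ≤ Metric.infDist (z 1) (closure W) := by
      rw [h1]; exact hDle m' (hSG m' hm'S hm'W)
    have hmem : s ∈ Set.Icc (Metric.infDist (z 0) (closure W))
        (Metric.infDist (z 1) (closure W)) := by
      constructor
      · rw [hg0]; exact hs0.le
      · linarith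
    obtain ⟨t, ht, hts⟩ := intermediate_value_Icc zero_le_one hg hmem
    exact ⟨t, ht, hηle _ hts⟩
  rw [hΘ] at hfinal
  rw [← hΛdef] at hfinal
  linarith
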